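/- Let n ≥ 1, β > 0, t > 0, and let μ be a nonzero nonnegative finite Borel measure on ℝⁿ. Define v_t(x) = (2πβ(1−e^{−2t}))^{−n/2} ∫_{ℝⁿ} exp(−|x − e^{−t}y|²/(2β(1−e^{−2t}))) dμ(y), the solution at time t of the β-Fokker–Planck equation ∂_t v = βΔv + x·∇v + n v with initial data μ. Then for every x ∈ ℝⁿ, ∇² log v_t(x) ≥ −(1/((1−e^{−2t})β))·id in the sense of symmetric matrices. In particular, if v = v_*(t_*,·) where v_* solves the 2β-Fokker–Planck equation with nonnegative finite initial measure and t_* = (1/2) log 2 (i.e. v belongs to the class FP(β)), then ∇² log v ≥ −(1/β)·id. -/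

import Mathlib

open MeasureTheory Real Filter

noncomputable section

/-- The centred Gaussian density on `ℝⁿ` with variance `β`:
`γ_β(x) = (2πβ)^{-n/2} exp(-|x|²/(2β))`. -/
def gaussDensity (n : ℕ) (β : ℝ) (x : EuclideanSpace ℝ (Fin n)) : ℝ :=
  (2 * π * β) ^ (-(n : ℝ) / 2) * exp (-‖x‖ ^ 2 / (2 * β))

/-- The standard Gaussian probability measure `dγ` on `ℝⁿ`. -/
def gaussMeasure (n : ℕ) : Measure (EuclideanSpace ℝ (Fin n)) :=
  volume.withDensity fun x => ENNReal.ofReal (gaussDensity n 1 x)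

/-- The Ornstein–Uhlenbeck semigroup
`P_s f(x) = ∫ f(e^{-s} x + √(1-e^{-2s}) y) dγ(y)`. -/
def OU (n : ℕ) (s : ℝ) (f : EuclideanSpace ℝ (Fin n) → ℝ)
    (x : EuclideanSpace ℝ (Fin n)) : ℝ :=
  ∫ y, f (exp (-s) • x + Real.sqrt (1 - exp (-2 * s)) • y) ∂(gaussMeasure n)

/-- The `L^r(γ)` functional `(∫ g^r dγ)^{1/r}` (for positive `g`). -/
def gaussLr (n : ℕ) (r : ℝ) (g : EuclideanSpace ℝ (Fin n) → ℝ) : ℝ :=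
  (∫ x, g x ^ r ∂(gaussMeasure n)) ^ (1 / r)

/-- The entropy with respect to the Gaussian measure:
`Ent_γ(f) = ∫ f log f dγ - (∫ f dγ) log (∫ f dγ)`. -/
def gaussEnt (n : ℕ) (f : EuclideanSpace ℝ (Fin n) → ℝ) : ℝ :=
  ∫ x, f x * log (f x) ∂(gaussMeasure n)
    - (∫ x, f x ∂(gaussMeasure n)) * log (∫ x, f x ∂(gaussMeasure n))

/-- The Fisher information with respect to the Gaussian measure:
`I_γ(f) = ∫ |∇f|²/f dγ`. -/
def gaussFisher (n : ℕ) (f : EuclideanSpace ℝ (Fin n) → ℝ) : ℝ :=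
  ∫ x, ‖gradient f x‖ ^ 2 / f x ∂(gaussMeasure n)

/-- The Laplacian, as the sum of the second derivatives in the coordinate directions. -/
def lap (n : ℕ) (f : EuclideanSpace ℝ (Fin n) → ℝ) (x : EuclideanSpace ℝ (Fin n)) : ℝ :=
  ∑ i : Fin n,
    iteratedFDeriv ℝ 2 f x ![EuclideanSpace.single i (1 : ℝ), EuclideanSpace.single i (1 : ℝ)]

/-- The Hessian quadratic form `⟨u, ∇²f(x) u⟩`. -/
def hess (n : ℕ) (f : EuclideanSpace ℝ (Fin n) → ℝ)
    (x u : EuclideanSpace ℝ (Fin n)) : ℝ :=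
  iteratedFDeriv ℝ 2 f x ![u, u]

/-- The squared quadratic Wasserstein distance, as the infimum over couplings of the
integral of the squared distance. -/
def W2sq (n : ℕ) (μ ν : Measure (EuclideanSpace ℝ (Fin n))) : ℝ :=
  sInf { r : ℝ | ∃ pl : Measure (EuclideanSpace ℝ (Fin n) × EuclideanSpace ℝ (Fin n)),
    pl.map Prod.fst = μ ∧ pl.map Prod.snd = ν ∧ r = ∫ p, ‖p.1 - p.2‖ ^ 2 ∂pl }

/-- The covariance matrix of a probability density `v` on `ℝⁿ`. -/
def covMatrix (n : ℕ) (v : EuclideanSpace ℝ (Fin n) → ℝ) : Matrix (Fin n) (Fin n) ℝ :=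
  fun i j => (∫ x, x i * x j * v x) - (∫ x, x i * v x) * (∫ x, x j * v x)

/-- The Hopf–Lax (inf-convolution) formula `Q_τ f(x) = inf_y { f(y) + |x-y|²/(2τ) }`. -/
def hopfLax (n : ℕ) (τ : ℝ) (f : EuclideanSpace ℝ (Fin n) → ℝ)
    (x : EuclideanSpace ℝ (Fin n)) : ℝ :=
  ⨅ y, (f y + ‖x - y‖ ^ 2 / (2 * τ))


set_option synthInstance.maxHeartbeats 1000000
set_option maxHeartbeats 2000000

namespace FPaux

lemma exp_le_one' {s : ℝ} (hs : 0 < s) (r : ℝ) : Real.exp (-r ^ 2 / s) ≤ 1 := by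
  rw [neg_div]
  exact Real.exp_le_one_iff.mpr (neg_nonpos.mpr (by positivity))

lemma exp_inv_bound {s : ℝ} (hs : 0 < s) {r : ℝ} (hr2 : 0 < r) :
    Real.exp (-r ^ 2 / s) ≤ s / r ^ 2 := by
  rw [neg_div, Real.exp_neg]
  have h1 : r ^ 2 / s ≤ Real.exp (r ^ 2 / s) := by
    linarith [Real.add_one_le_exp (r ^ 2 / s)]
  have h2 : 0 < r ^ 2 / s := by positivity
  rw [inv_le_comm₀ (Real.exp_pos _) (by positivity)]
  calc (s / r ^ 2)⁻¹ = r ^ 2 / s := by field_simp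
    _ ≤ Real.exp (r ^ 2 / s) := h1

lemma exp_sq_bound {s : ℝ} (hs : 0 < s) {r : ℝ} (hr : 0 ≤ r) :
    Real.exp (-r ^ 2 / s) * r ≤ Real.sqrt s := by
  have hsq : 0 < Real.sqrt s := Real.sqrt_pos.mpr hs
  have hone := exp_le_one' hs r
  have hE : 0 < Real.exp (-r ^ 2 / s) := Real.exp_pos _
  rcases le_or_gt r (Real.sqrt s) with h | h
  · nlinarith
  · have hr2 : 0 < r := lt_trans hsq h
    have hinv := exp_inv_bound hs hr2
    calc Real.exp (-r ^ 2 / s) * r ≤ s / r ^ 2 * r := by nlinarith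
      _ = s / r := by field_simp
      _ ≤ s / Real.sqrt s := div_le_div_of_nonneg_left hs.le hsq h.le
      _ = Real.sqrt s := Real.div_sqrt

lemma exp_sq_bound2 {s : ℝ} (hs : 0 < s) {r : ℝ} (hr : 0 ≤ r) :
    Real.exp (-r ^ 2 / s) * r ^ 2 ≤ s := by
  have hone := exp_le_one' hs r
  have hE : 0 < Real.exp (-r ^ 2 / s) := Real.exp_pos _
  rcases le_or_gt (r ^ 2) s with h2 | h2
  · nlinarith
  · have hr2 : 0 < r := by nlinarith
    have hinv := exp_inv_bound hs hr2
    calc Real.exp (-r ^ 2 / s) * r ^ 2 ≤ s / r ^ 2 * r ^ 2 := by nlinarith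
      _ = s := by field_simp

variable {n : ℕ}

local notation "E" => EuclideanSpace ℝ (Fin n)

def Q (s a : ℝ) (z y : E) : ℝ := -‖z - a • y‖ ^ 2 / s

def F1 (s a : ℝ) (z y : E) : E →L[ℝ] ℝ :=
  Real.exp (Q s a z y) • ((-(2 / s)) • innerSL ℝ (z - a • y))

def N (n : ℕ) (s : ℝ) : E →L[ℝ] (E →L[ℝ] ℝ) := (-(2 / s)) • (innerSL ℝ)

def F2 (s a : ℝ) (z y : E) : E →L[ℝ] (E →L[ℝ] ℝ) :=
  Real.exp (Q s a z y) • N n s + (F1 s a z y).smulRight ((-(2 / s)) • innerSL ℝ (z - a • y))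

lemma F1_apply (s a : ℝ) (z y v : E) :
    F1 s a z y v = Real.exp (Q s a z y) * (-(2 / s) * (inner ℝ (z - a • y) v : ℝ)) := rfl

lemma F2_apply (s a : ℝ) (z y v w : E) :
    F2 s a z y v w = Real.exp (Q s a z y) * (-(2 / s) * (inner ℝ v w : ℝ))
      + (F1 s a z y v) * (-(2 / s) * (inner ℝ (z - a • y) w : ℝ)) := rfl

lemma hQ (s a : ℝ) (y z : E) :
    HasFDerivAt (fun z : E => Q s a z y) ((-(2 / s)) • innerSL ℝ (z - a • y)) z := by
  have h0 : HasFDerivAt (fun z : E => z - a • y) (ContinuousLinearMap.id ℝ E) z :=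
    (hasFDerivAt_id z).sub_const _
  exact ((h0.norm_sq.neg).mul_const s⁻¹).congr_fderiv (by
    ext w
    simp [ContinuousLinearMap.smul_apply]
    ring)

lemma hF0 (s a : ℝ) (y z : E) :
    HasFDerivAt (fun z : E => Real.exp (Q s a z y)) (F1 s a z y) z :=
  (hQ s a y z).exp

lemma hm (s a : ℝ) (y z : E) :
    HasFDerivAt (fun z : E => (-(2 / s)) • innerSL ℝ (z - a • y)) (N n s) z := by
  have he : (fun z : E => (-(2 / s)) • innerSL ℝ (z - a • y))
      = fun z : E => N n s z - (-(2 / s)) • innerSL ℝ (a • y) := by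
    funext z
    simp only [N, ContinuousLinearMap.smul_apply, map_sub, smul_sub]
  rw [he]
  exact ((N n s).hasFDerivAt).sub_const _

lemma hF1 (s a : ℝ) (y z : E) :
    HasFDerivAt (fun z : E => F1 s a z y) (F2 s a z y) z :=
  (hF0 s a y z).smul (hm s a y z)

lemma normF1 {s : ℝ} (a : ℝ) (hs : 0 < s) (z y : E) :
    ‖F1 s a z y‖ ≤ 2 / s * Real.sqrt s := by
  apply ContinuousLinearMap.opNorm_le_bound _ (by positivity)
  intro v
  have h1 : |(inner ℝ (z - a • y) v : ℝ)| ≤ ‖z - a • y‖ * ‖v‖ := abs_real_inner_le_norm _ _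
  have h2 : Real.exp (Q s a z y) * ‖z - a • y‖ ≤ Real.sqrt s :=
    exp_sq_bound hs (norm_nonneg _)
  have hE : 0 < Real.exp (Q s a z y) := Real.exp_pos _
  have hv : 0 ≤ ‖v‖ := norm_nonneg _
  rw [F1_apply, Real.norm_eq_abs, abs_mul, Real.abs_exp, abs_mul, abs_neg, abs_div,
    abs_of_nonneg hs.le, (by norm_num : |(2:ℝ)| = 2)]
  calc Real.exp (Q s a z y) * (2 / s * |(inner ℝ (z - a • y) v : ℝ)|)
      = 2 / s * (Real.exp (Q s a z y) * |(inner ℝ (z - a • y) v : ℝ)|) := by ring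
    _ ≤ 2 / s * ((Real.exp (Q s a z y) * ‖z - a • y‖) * ‖v‖) := by
        apply mul_le_mul_of_nonneg_left _ (by positivity)
        calc Real.exp (Q s a z y) * |(inner ℝ (z - a • y) v : ℝ)|
            ≤ Real.exp (Q s a z y) * (‖z - a • y‖ * ‖v‖) :=
              mul_le_mul_of_nonneg_left h1 hE.le
          _ = (Real.exp (Q s a z y) * ‖z - a • y‖) * ‖v‖ := by ring
    _ ≤ 2 / s * (Real.sqrt s * ‖v‖) := by
        apply mul_le_mul_of_nonneg_left (mul_le_mul_of_nonneg_right h2 hv) (by positivity)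
    _ = 2 / s * Real.sqrt s * ‖v‖ := by ring

lemma normF2 {s : ℝ} (a : ℝ) (hs : 0 < s) (z y : E) : ‖F2 s a z y‖ ≤ 6 / s := by
  apply ContinuousLinearMap.opNorm_le_bound _ (by positivity)
  intro v
  apply ContinuousLinearMap.opNorm_le_bound _ (by positivity)
  intro w
  rw [F2_apply, F1_apply]
  have hE : 0 < Real.exp (Q s a z y) := Real.exp_pos _
  have h1 : |(inner ℝ v w : ℝ)| ≤ ‖v‖ * ‖w‖ := abs_real_inner_le_norm _ _
  have h2 : |(inner ℝ (z - a • y) w : ℝ)| ≤ ‖z - a • y‖ * ‖w‖ := abs_real_inner_le_norm _ _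
  have h3 : |(inner ℝ (z - a • y) v : ℝ)| ≤ ‖z - a • y‖ * ‖v‖ := abs_real_inner_le_norm _ _
  have h4 : Real.exp (Q s a z y) ≤ 1 := exp_le_one' hs _
  have h5 : Real.exp (Q s a z y) * ‖z - a • y‖ ^ 2 ≤ s := exp_sq_bound2 hs (norm_nonneg _)
  have hv : 0 ≤ ‖v‖ := norm_nonneg _
  have hw : 0 ≤ ‖w‖ := norm_nonneg _
  have hr : 0 ≤ ‖z - a • y‖ := norm_nonneg _
  rw [Real.norm_eq_abs]
  have hs2 : 0 < 2 / s := by positivity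
  calc |Real.exp (Q s a z y) * (-(2 / s) * (inner ℝ v w : ℝ))
        + Real.exp (Q s a z y) * (-(2 / s) * (inner ℝ (z - a • y) v : ℝ))
          * (-(2 / s) * (inner ℝ (z - a • y) w : ℝ))|
      ≤ |Real.exp (Q s a z y) * (-(2 / s) * (inner ℝ v w : ℝ))|
        + |Real.exp (Q s a z y) * (-(2 / s) * (inner ℝ (z - a • y) v : ℝ))
          * (-(2 / s) * (inner ℝ (z - a • y) w : ℝ))| := abs_add_le _ _
    _ = Real.exp (Q s a z y) * ((2 / s) * |(inner ℝ v w : ℝ)|)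
        + Real.exp (Q s a z y) * ((2 / s) * |(inner ℝ (z - a • y) v : ℝ)|)
          * ((2 / s) * |(inner ℝ (z - a • y) w : ℝ)|) := by
        rw [abs_mul, abs_mul, Real.abs_exp, abs_mul, abs_neg, abs_div,
          abs_of_nonneg hs.le, (by norm_num : |(2:ℝ)| = 2), abs_mul, Real.abs_exp,
          abs_mul, abs_neg, abs_div, abs_of_nonneg hs.le, (by norm_num : |(2:ℝ)| = 2),
          abs_mul, abs_neg, abs_div, abs_of_nonneg hs.le, (by norm_num : |(2:ℝ)| = 2)]
    _ ≤ (2 / s) * (‖v‖ * ‖w‖)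
        + (2 / s) ^ 2 * ((Real.exp (Q s a z y) * ‖z - a • y‖ ^ 2) * (‖v‖ * ‖w‖)) := by
        have t1 : Real.exp (Q s a z y) * ((2 / s) * |(inner ℝ v w : ℝ)|)
            ≤ (2 / s) * (‖v‖ * ‖w‖) := by
          calc Real.exp (Q s a z y) * ((2 / s) * |(inner ℝ v w : ℝ)|)
              = 2 / s * (Real.exp (Q s a z y) * |(inner ℝ v w : ℝ)|) := by ring
            _ ≤ 2 / s * (1 * (‖v‖ * ‖w‖)) := mul_le_mul_of_nonneg_left
                (mul_le_mul h4 h1 (abs_nonneg _) zero_le_one) hs2.le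
            _ = (2 / s) * (‖v‖ * ‖w‖) := by ring
        have t2 : Real.exp (Q s a z y) * ((2 / s) * |(inner ℝ (z - a • y) v : ℝ)|)
              * ((2 / s) * |(inner ℝ (z - a • y) w : ℝ)|)
            ≤ (2 / s) ^ 2 * ((Real.exp (Q s a z y) * ‖z - a • y‖ ^ 2) * (‖v‖ * ‖w‖)) := by
          calc Real.exp (Q s a z y) * ((2 / s) * |(inner ℝ (z - a • y) v : ℝ)|)
                * ((2 / s) * |(inner ℝ (z - a • y) w : ℝ)|)
              = (2 / s) ^ 2 * (Real.exp (Q s a z y)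
                  * (|(inner ℝ (z - a • y) v : ℝ)| * |(inner ℝ (z - a • y) w : ℝ)|)) := by ring
            _ ≤ (2 / s) ^ 2 * (Real.exp (Q s a z y)
                  * ((‖z - a • y‖ * ‖v‖) * (‖z - a • y‖ * ‖w‖))) := by
                apply mul_le_mul_of_nonneg_left
                  (mul_le_mul_of_nonneg_left
                    (mul_le_mul h3 h2 (abs_nonneg _) (by positivity)) hE.le) (by positivity)
            _ = (2 / s) ^ 2 * ((Real.exp (Q s a z y) * ‖z - a • y‖ ^ 2) * (‖v‖ * ‖w‖)) := by
                ring
        linarith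
    _ ≤ (2 / s) * (‖v‖ * ‖w‖) + (2 / s) ^ 2 * (s * (‖v‖ * ‖w‖)) := by
        have t3 : (2 / s) ^ 2 * ((Real.exp (Q s a z y) * ‖z - a • y‖ ^ 2) * (‖v‖ * ‖w‖))
            ≤ (2 / s) ^ 2 * (s * (‖v‖ * ‖w‖)) := by
          apply mul_le_mul_of_nonneg_left
            (mul_le_mul_of_nonneg_right h5 (by positivity)) (by positivity)
        linarith
    _ = 6 / s * ‖v‖ * ‖w‖ := by field_simp; ring

lemma contQexp (s a : ℝ) (z : E) : Continuous fun y : E => Real.exp (Q s a z y) := by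
  apply Real.continuous_exp.comp
  unfold Q
  fun_prop

lemma contInner (a : ℝ) (z : E) : Continuous fun y : E => innerSL ℝ (z - a • y) := by
  apply (innerSL ℝ : E →L[ℝ] E →L[ℝ] ℝ).continuous.comp
  fun_prop

lemma contF1 (s a : ℝ) (z : E) : Continuous fun y : E => F1 s a z y := by
  unfold F1
  exact (contQexp s a z).fun_smul ((contInner a z).fun_const_smul _)

lemma contF2 (s a : ℝ) (z : E) : Continuous fun y : E => F2 s a z y := by
  unfold F2
  haveI : ContinuousAdd (E →L[ℝ] E →L[ℝ] ℝ) := ContinuousLinearMap.topologicalAddGroup.toContinuousAdd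
  apply Continuous.fun_add
  · exact (contQexp s a z).smul continuous_const
  · have h1 : Continuous fun y : E =>
        (ContinuousLinearMap.smulRightL ℝ E (E →L[ℝ] ℝ)) (F1 s a z y) :=
      (ContinuousLinearMap.smulRightL ℝ E (E →L[ℝ] ℝ)).continuous.comp (contF1 s a z)
    exact h1.clm_apply ((contInner a z).fun_const_smul _)


lemma key (s a C : ℝ) (hs : 0 < s) (hC : 0 < C)
    (μ : Measure E) [IsFiniteMeasure μ] (hμ : μ ≠ 0)
    (x u : E) :
    iteratedFDeriv ℝ 2 (fun z => Real.log (C * ∫ y, Real.exp (Q s a z y) ∂μ)) x ![u, u]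
      ≥ -(2 / s) * ‖u‖ ^ 2 := by
  -- integrability of the basic integrands
  have iQ : ∀ z : E, Integrable (fun y => Real.exp (Q s a z y)) μ := fun z =>
    (integrable_const (1 : ℝ)).mono' ((contQexp s a z).aestronglyMeasurable)
      (ae_of_all _ fun y => by
        rw [Real.norm_eq_abs, Real.abs_exp]
        exact exp_le_one' hs ‖z - a • y‖)
  have iF1 : ∀ z : E, Integrable (fun y => F1 s a z y) μ := fun z =>
    (integrable_const (2 / s * Real.sqrt s)).mono' ((contF1 s a z).aestronglyMeasurable)
      (ae_of_all _ fun y => normF1 a hs z y)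
  have iF2 :=
    (integrable_const (μ := μ) (6 / s)).mono' (f := fun y => F2 s a x y) ((contF2 s a x).aestronglyMeasurable)
      (ae_of_all _ fun y => normF2 a hs x y)
  -- differentiation under the integral sign, first derivative
  have hI : ∀ z : E, HasFDerivAt (fun z : E => ∫ y, Real.exp (Q s a z y) ∂μ)
      (∫ y, F1 s a z y ∂μ) z := by
    intro z
    apply hasFDerivAt_integral_of_dominated_of_fderiv_le (Metric.ball_mem_nhds _ one_pos)
      (bound := fun _ => 2 / s * Real.sqrt s)
    · exact Eventually.of_forall fun z' => (contQexp s a z').aestronglyMeasurable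
    · exact iQ z
    · exact (contF1 s a z).aestronglyMeasurable
    · exact ae_of_all _ fun y z' _ => normF1 a hs z' y
    · exact integrable_const _
    · exact ae_of_all _ fun y z' _ => hF0 s a y z'
  -- second derivative
  have hJ : HasFDerivAt (fun z : E => ∫ y, F1 s a z y ∂μ) (∫ y, F2 s a x y ∂μ) x := by
    apply hasFDerivAt_integral_of_dominated_of_fderiv_le (Metric.ball_mem_nhds _ one_pos)
      (bound := fun _ => 6 / s)
    · exact Eventually.of_forall fun z' => (contF1 s a z').aestronglyMeasurable
    · exact iF1 x
    · exact (contF2 s a x).aestronglyMeasurable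
    · exact ae_of_all _ fun y z' _ => normF2 a hs z' y
    · exact integrable_const _
    · exact ae_of_all _ fun y z' _ => hF1 s a y z'
  -- positivity of the integral
  have hIpos : ∀ z : E, 0 < ∫ y, Real.exp (Q s a z y) ∂μ := by
    intro z
    rw [integral_pos_iff_support_of_nonneg (fun y => (Real.exp_pos _).le) (iQ z)]
    have hsup : (Function.support fun y => Real.exp (Q s a z y)) = Set.univ := by
      ext y
      simp [Function.mem_support, (Real.exp_pos _).ne']
    rw [hsup]
    exact Measure.measure_univ_pos.mpr hμ
  -- derivative of the log
  have hf : ∀ z : E, HasFDerivAt (fun z : E => Real.log (C * ∫ y, Real.exp (Q s a z y) ∂μ))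
      ((∫ y, Real.exp (Q s a z y) ∂μ)⁻¹ • ∫ y, F1 s a z y ∂μ) z := by
    intro z
    have hpos : 0 < C * ∫ y, Real.exp (Q s a z y) ∂μ := mul_pos hC (hIpos z)
    refine (((hI z).const_mul C).log hpos.ne').congr_fderiv ?_
    rw [smul_smul]
    congr 1
    rw [mul_inv, mul_comm C⁻¹, mul_assoc, inv_mul_cancel₀ hC.ne', mul_one]
  have hfd : (fderiv ℝ (fun z : E => Real.log (C * ∫ y, Real.exp (Q s a z y) ∂μ)))
      = fun z : E => (∫ y, Real.exp (Q s a z y) ∂μ)⁻¹ • ∫ y, F1 s a z y ∂μ :=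
    funext fun z => (hf z).fderiv
  -- derivative of the derivative
  have hc : HasFDerivAt (fun z : E => (∫ y, Real.exp (Q s a z y) ∂μ)⁻¹)
      ((-((∫ y, Real.exp (Q s a x y) ∂μ) ^ 2)⁻¹) • (∫ y, F1 s a x y ∂μ)) x :=
    (hasDerivAt_inv (hIpos x).ne').comp_hasFDerivAt x (hI x)
  have hD : HasFDerivAt
      (fun z : E => (∫ y, Real.exp (Q s a z y) ∂μ)⁻¹ • ∫ y, F1 s a z y ∂μ)
      ((∫ y, Real.exp (Q s a x y) ∂μ)⁻¹ • (∫ y, F2 s a x y ∂μ)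
        + ((-((∫ y, Real.exp (Q s a x y) ∂μ) ^ 2)⁻¹) • (∫ y, F1 s a x y ∂μ)).smulRight
            (∫ y, F1 s a x y ∂μ)) x :=
    hc.smul hJ
  -- compute the Hessian
  have hiF2u : Integrable (fun y => F2 s a x y u) μ :=
    iF2.apply_continuousLinearMap u
  have hhess : iteratedFDeriv ℝ 2 (fun z => Real.log (C * ∫ y, Real.exp (Q s a z y) ∂μ)) x
        ![u, u]
      = (∫ y, Real.exp (Q s a x y) ∂μ)⁻¹ * (∫ y, F2 s a x y u u ∂μ)
        + ((-((∫ y, Real.exp (Q s a x y) ∂μ) ^ 2)⁻¹) * (∫ y, F1 s a x y u ∂μ))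
          * (∫ y, F1 s a x y u ∂μ) := by
    rw [iteratedFDeriv_two_apply]
    simp only [Matrix.cons_val_zero, Matrix.cons_val_one, Matrix.head_cons]
    rw [hfd, hD.fderiv]
    simp only [ContinuousLinearMap.add_apply, ContinuousLinearMap.smul_apply,
      ContinuousLinearMap.smulRight_apply, smul_eq_mul]
    rw [ContinuousLinearMap.integral_apply iF2, ContinuousLinearMap.integral_apply hiF2u,
      ContinuousLinearMap.integral_apply (iF1 x)]
  rw [hhess]
  -- scalar reformulation
  have hF1app : ∀ y : E, F1 s a x y u
      = -(2 / s) * (Real.exp (Q s a x y) * (inner ℝ (x - a • y) u : ℝ)) := by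
    intro y; rw [F1_apply]; ring
  have hF2app : ∀ y : E, F2 s a x y u u
      = -(2 / s) * ‖u‖ ^ 2 * Real.exp (Q s a x y)
        + (2 / s) ^ 2 * (Real.exp (Q s a x y) * (inner ℝ (x - a • y) u : ℝ) ^ 2) := by
    intro y
    rw [F2_apply, F1_apply, real_inner_self_eq_norm_sq]
    ring
  -- integrability of the scalar integrands
  have contw : Continuous fun y : E => (inner ℝ (x - a • y) u : ℝ) :=
    Continuous.inner (by fun_prop) continuous_const
  have iAw : Integrable (fun y => Real.exp (Q s a x y) * (inner ℝ (x - a • y) u : ℝ)) μ := by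
    refine (integrable_const (Real.sqrt s * ‖u‖)).mono'
      (((contQexp s a x).mul contw).aestronglyMeasurable) (ae_of_all _ fun y => ?_)
    rw [Real.norm_eq_abs, abs_mul, Real.abs_exp]
    calc Real.exp (Q s a x y) * |(inner ℝ (x - a • y) u : ℝ)|
        ≤ Real.exp (Q s a x y) * (‖x - a • y‖ * ‖u‖) :=
          mul_le_mul_of_nonneg_left (abs_real_inner_le_norm _ _) (Real.exp_pos _).le
      _ = (Real.exp (Q s a x y) * ‖x - a • y‖) * ‖u‖ := by ring
      _ ≤ Real.sqrt s * ‖u‖ := mul_le_mul_of_nonneg_right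
          (exp_sq_bound hs (norm_nonneg _)) (norm_nonneg u)
  have iAw2 : Integrable (fun y => Real.exp (Q s a x y) * (inner ℝ (x - a • y) u : ℝ) ^ 2) μ := by
    refine (integrable_const (s * ‖u‖ ^ 2)).mono'
      (((contQexp s a x).mul (contw.pow 2)).aestronglyMeasurable) (ae_of_all _ fun y => ?_)
    rw [Real.norm_eq_abs, abs_mul, Real.abs_exp, abs_pow, sq_abs]
    calc Real.exp (Q s a x y) * (inner ℝ (x - a • y) u : ℝ) ^ 2
        ≤ Real.exp (Q s a x y) * (‖x - a • y‖ ^ 2 * ‖u‖ ^ 2) := by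
          apply mul_le_mul_of_nonneg_left _ (Real.exp_pos _).le
          have := abs_real_inner_le_norm (x - a • y) u
          nlinarith [abs_nonneg (inner ℝ (x - a • y) u : ℝ),
            sq_abs (inner ℝ (x - a • y) u : ℝ), norm_nonneg (x - a • y), norm_nonneg u]
      _ = (Real.exp (Q s a x y) * ‖x - a • y‖ ^ 2) * ‖u‖ ^ 2 := by ring
      _ ≤ s * ‖u‖ ^ 2 := mul_le_mul_of_nonneg_right
          (exp_sq_bound2 hs (norm_nonneg _)) (by positivity)
  -- the three scalar integrals
  set A : ℝ := ∫ y, Real.exp (Q s a x y) ∂μ with hA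
  set B : ℝ := ∫ y, Real.exp (Q s a x y) * (inner ℝ (x - a • y) u : ℝ) ∂μ with hB
  set D : ℝ := ∫ y, Real.exp (Q s a x y) * (inner ℝ (x - a • y) u : ℝ) ^ 2 ∂μ with hD2
  have hApos : 0 < A := hIpos x
  have hint1 : ∫ y, F1 s a x y u ∂μ = -(2 / s) * B := by
    rw [hB, ← integral_const_mul]
    exact integral_congr_ae (ae_of_all _ fun y => hF1app y)
  have hint2 : ∫ y, F2 s a x y u u ∂μ = -(2 / s) * ‖u‖ ^ 2 * A + (2 / s) ^ 2 * D := by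
    rw [hA, hD2, ← integral_const_mul, ← integral_const_mul, ← integral_add
      ((iQ x).const_mul _) (iAw2.const_mul _)]
    exact integral_congr_ae (ae_of_all _ fun y => hF2app y)
  rw [hint1, hint2]
  -- Cauchy-Schwarz
  have hCS : B ^ 2 ≤ A * D := by
    have hnn : 0 ≤ ∫ y, Real.exp (Q s a x y) * ((inner ℝ (x - a • y) u : ℝ) - B / A) ^ 2 ∂μ :=
      integral_nonneg fun y => by positivity
    have hexp : ∫ y, Real.exp (Q s a x y) * ((inner ℝ (x - a • y) u : ℝ) - B / A) ^ 2 ∂μ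
        = D - 2 * (B / A) * B + (B / A) ^ 2 * A := by
      have hpt : ∀ y : E, Real.exp (Q s a x y) * ((inner ℝ (x - a • y) u : ℝ) - B / A) ^ 2
          = Real.exp (Q s a x y) * (inner ℝ (x - a • y) u : ℝ) ^ 2
            - 2 * (B / A) * (Real.exp (Q s a x y) * (inner ℝ (x - a • y) u : ℝ))
            + (B / A) ^ 2 * Real.exp (Q s a x y) := fun y => by ring
      have i2 : Integrable (fun y => 2 * (B / A)
          * (Real.exp (Q s a x y) * (inner ℝ (x - a • y) u : ℝ))) μ := iAw.const_mul _
      have i3 : Integrable (fun y => (B / A) ^ 2 * Real.exp (Q s a x y)) μ :=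
        (iQ x).const_mul _
      have i12 : Integrable (fun y => Real.exp (Q s a x y) * (inner ℝ (x - a • y) u : ℝ) ^ 2
          - 2 * (B / A) * (Real.exp (Q s a x y) * (inner ℝ (x - a • y) u : ℝ))) μ :=
        iAw2.sub i2
      rw [integral_congr_ae (ae_of_all _ hpt), integral_add i12 i3,
        integral_sub iAw2 i2, integral_const_mul, integral_const_mul, ← hA, ← hB, ← hD2]
    rw [hexp] at hnn
    have h0 : 0 ≤ D - B ^ 2 / A := by
      have heq : D - 2 * (B / A) * B + (B / A) ^ 2 * A = D - B ^ 2 / A := by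
        field_simp
        ring
      linarith [heq ▸ hnn]
    have hfs : A * (B ^ 2 / A) = B ^ 2 := by field_simp
    nlinarith [mul_nonneg hApos.le h0, hfs]
  -- final arithmetic
  have hkey : A⁻¹ * (-(2 / s) * ‖u‖ ^ 2 * A + (2 / s) ^ 2 * D)
        + -(A ^ 2)⁻¹ * (-(2 / s) * B) * (-(2 / s) * B) - (-(2 / s) * ‖u‖ ^ 2)
      = (2 / s) ^ 2 * ((A * D - B ^ 2) / A ^ 2) := by
    field_simp
    ring
  have hge : 0 ≤ (2 / s) ^ 2 * ((A * D - B ^ 2) / A ^ 2) := by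
    apply mul_nonneg (by positivity)
    apply div_nonneg _ (by positivity)
    linarith
  linarith [hkey ▸ hge]


lemma main1 (n : ℕ) (β t : ℝ) (hβ : 0 < β) (ht : 0 < t)
    (μ : Measure (EuclideanSpace ℝ (Fin n))) [IsFiniteMeasure μ] (hμ : μ ≠ 0)
    (x u : EuclideanSpace ℝ (Fin n)) :
    iteratedFDeriv ℝ 2 (fun z => Real.log ((2 * π * β * (1 - Real.exp (-2 * t))) ^ (-(n : ℝ) / 2)
        * ∫ y, Real.exp (-‖z - Real.exp (-t) • y‖ ^ 2
            / (2 * β * (1 - Real.exp (-2 * t)))) ∂μ)) x ![u, u]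
      ≥ -(1 / ((1 - Real.exp (-2 * t)) * β)) * ‖u‖ ^ 2 := by
  have h1e : 0 < 1 - Real.exp (-2 * t) := by
    have h := Real.exp_lt_one_iff.mpr (show -2 * t < 0 by linarith)
    linarith
  have hs : 0 < 2 * β * (1 - Real.exp (-2 * t)) := by positivity
  have hC : 0 < (2 * π * β * (1 - Real.exp (-2 * t))) ^ (-(n : ℝ) / 2) :=
    Real.rpow_pos_of_pos (by nlinarith [Real.pi_pos]) _
  have h := key (n := n) (2 * β * (1 - Real.exp (-2 * t))) (Real.exp (-t))
    ((2 * π * β * (1 - Real.exp (-2 * t))) ^ (-(n : ℝ) / 2)) hs hC μ hμ x u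
  have h2 : (2 : ℝ) / (2 * β * (1 - Real.exp (-2 * t)))
      = 1 / ((1 - Real.exp (-2 * t)) * β) := by
    rw [div_eq_div_iff (by positivity) (by positivity)]
    ring
  have h' : iteratedFDeriv ℝ 2
      (fun z => Real.log ((2 * π * β * (1 - Real.exp (-2 * t))) ^ (-(n : ℝ) / 2)
        * ∫ y, Real.exp (-‖z - Real.exp (-t) • y‖ ^ 2
            / (2 * β * (1 - Real.exp (-2 * t)))) ∂μ)) x ![u, u]
      ≥ -(2 / (2 * β * (1 - Real.exp (-2 * t)))) * ‖u‖ ^ 2 := h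
  rw [h2] at h'
  exact h'

end FPaux

/-- Semi-log-convexity of solutions to the Fokker–Planck equation with measure initial data,
and in particular of members of the class `FP(β)`. -/
theorem fokkerPlanck_semiLogConvexity
    (n : ℕ) (hn : 1 ≤ n) (β t : ℝ) (hβ : 0 < β) (ht : 0 < t)
    (μ : Measure (EuclideanSpace ℝ (Fin n))) (hfin : IsFiniteMeasure μ) (hμ : μ ≠ 0) :
    (∀ x u : EuclideanSpace ℝ (Fin n),
      hess n (fun z => log ((2 * π * β * (1 - exp (-2 * t))) ^ (-(n : ℝ) / 2)
          * ∫ y, exp (-‖z - exp (-t) • y‖ ^ 2 / (2 * β * (1 - exp (-2 * t)))) ∂μ)) x u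
        ≥ -(1 / ((1 - exp (-2 * t)) * β)) * ‖u‖ ^ 2) ∧
    (∀ v : EuclideanSpace ℝ (Fin n) → ℝ,
      (∃ ν : Measure (EuclideanSpace ℝ (Fin n)), IsFiniteMeasure ν ∧ ν ≠ 0 ∧
        v = fun z =>
          (2 * π * (2 * β) * (1 - exp (-2 * ((1 : ℝ) / 2 * Real.log 2)))) ^ (-(n : ℝ) / 2)
            * ∫ y, exp (-‖z - exp (-((1 : ℝ) / 2 * Real.log 2)) • y‖ ^ 2
                / (2 * (2 * β) * (1 - exp (-2 * ((1 : ℝ) / 2 * Real.log 2))))) ∂ν) →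
      ∀ x u : EuclideanSpace ℝ (Fin n),
        hess n (fun z => log (v z)) x u ≥ -(1 / β) * ‖u‖ ^ 2) := by
  haveI := hfin
  constructor
  · intro x u
    exact FPaux.main1 n β t hβ ht μ hμ x u
  · rintro v ⟨ν, hν1, hν2, rfl⟩ x u
    haveI := hν1
    have ht2 : 0 < (1 : ℝ) / 2 * Real.log 2 := by
      have := Real.log_pos (by norm_num : (1 : ℝ) < 2)
      linarith
    have h := FPaux.main1 n (2 * β) ((1 : ℝ) / 2 * Real.log 2) (by linarith) ht2 ν hν2 x u
    have hconst : (1 - Real.exp (-2 * ((1 : ℝ) / 2 * Real.log 2))) * (2 * β) = β := by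
      rw [show (-2 * ((1 : ℝ) / 2 * Real.log 2)) = -Real.log 2 by ring, Real.exp_neg,
        Real.exp_log (by norm_num : (0 : ℝ) < 2)]
      ring
    rw [hconst] at h
    exact h


end
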